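/- Let R be a ring. If a flat left R-module M is the direct limit of a countable (ω-indexed) direct system of projective modules, then M has projective dimension at most 1. -/

import Mathlib

open Submodule

section Schanuel

variable {R : Type} [Ring R] {N F Q : Type} [AddCommGroup N] [Module R N]
  [AddCommGroup F] [Module R F] [AddCommGroup Q] [Module R Q]

/-- Kernel of a surjection onto a projective is a direct summand, hence projective. -/
theorem proj_ker_of_surj {X Q' : Type} [AddCommGroup X] [Module R X] [AddCommGroup Q']
    [Module R Q'] [Module.Projective R X] [Module.Projective R Q']
    (π : X →ₗ[R] Q') (hπ : Function.Surjective π) :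
    Module.Projective R (LinearMap.ker π) := by
  obtain ⟨s, hs⟩ := Module.projective_lifting_property π LinearMap.id hπ
  have hsect : ∀ y, π (s y) = y := fun y => by
    have := congrArg (fun g => g y) hs; simpa using this
  refine Module.Projective.of_split (LinearMap.ker π).subtype
    (LinearMap.codRestrict _ (LinearMap.id - s ∘ₗ π) fun x => ?_) ?_
  · simp [LinearMap.mem_ker, hsect]
  · ext x
    have hx : π (x : X) = 0 := x.2
    simp [LinearMap.codRestrict, hx]

theorem ker_projective_of_ker_projective
    [Module.Projective R F] [Module.Projective R Q]
    (p : F →ₗ[R] N) (q : Q →ₗ[R] N)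
    (hp : Function.Surjective p) (hq : Function.Surjective q)
    (hker : Module.Projective R (LinearMap.ker q)) :
    Module.Projective R (LinearMap.ker p) := by
  set d : F × Q →ₗ[R] N := p ∘ₗ LinearMap.fst R F Q - q ∘ₗ LinearMap.snd R F Q with hd
  set X := LinearMap.ker d with hX
  have memX : ∀ v : F × Q, v ∈ X ↔ p v.1 = q v.2 := fun v => by
    simp [hX, hd, LinearMap.mem_ker, sub_eq_zero]
  let π₁ : X →ₗ[R] F := LinearMap.fst R F Q ∘ₗ X.subtype
  let π₂ : X →ₗ[R] Q := LinearMap.snd R F Q ∘ₗ X.subtype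
  have hπ₁ : Function.Surjective π₁ := fun x => by
    obtain ⟨y, hy⟩ := hq (p x)
    exact ⟨⟨(x, y), (memX _).2 hy.symm⟩, rfl⟩
  have hπ₂ : Function.Surjective π₂ := fun y => by
    obtain ⟨x, hx⟩ := hp (q y)
    exact ⟨⟨(x, y), (memX _).2 hx⟩, rfl⟩
  -- ker π₁ ≃ ker q
  have e₁ : (LinearMap.ker π₁) ≃ₗ[R] (LinearMap.ker q) := by
    refine LinearEquiv.ofBijective
      (LinearMap.codRestrict _ (π₂ ∘ₗ (LinearMap.ker π₁).subtype) fun c => ?_) ⟨?_, ?_⟩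
    · have h1 : (c : X).1.1 = 0 := c.2
      have h2 := (memX (c : X).1).1 (c : X).2
      show q ((c : X) : F × Q).2 = 0
      rw [← h2, h1, map_zero]
    · intro a b hab
      have h2 : ((a : X) : F × Q).2 = ((b : X) : F × Q).2 := by
        simpa [LinearMap.codRestrict, Subtype.ext_iff, π₂] using hab
      have h1 : ((a : X) : F × Q).1 = ((b : X) : F × Q).1 := by
        rw [(show ((a : X) : F × Q).1 = 0 from a.2), (show ((b : X) : F × Q).1 = 0 from b.2)]
      exact Subtype.ext (Subtype.ext (Prod.ext h1 h2))
    · rintro ⟨y, hy⟩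
      refine ⟨⟨⟨(0, y), (memX _).2 (by simp [LinearMap.mem_ker.1 hy])⟩, ?_⟩, ?_⟩
      · show π₁ _ = 0
        simp [π₁]
      · apply Subtype.ext
        rfl
  haveI hK1 : Module.Projective R (LinearMap.ker π₁) := Module.Projective.of_equiv e₁.symm
  -- X is projective: split of (ker π₁) × F
  haveI hXproj : Module.Projective R X := by
    obtain ⟨t, ht⟩ := Module.projective_lifting_property π₁ LinearMap.id hπ₁
    have htsect : ∀ a, π₁ (t a) = a := fun a => by
      have := congrArg (fun g => g a) ht; simpa using this
    refine Module.Projective.of_split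
      (LinearMap.prod (LinearMap.codRestrict (LinearMap.ker π₁)
        (LinearMap.id - t ∘ₗ π₁) fun x => by simp [LinearMap.mem_ker, htsect]) π₁)
      (LinearMap.coprod (LinearMap.ker π₁).subtype t) ?_
    apply LinearMap.ext
    intro x
    show x - t (π₁ x) + t (π₁ x) = x
    abel
  haveI hK2 : Module.Projective R (LinearMap.ker π₂) := proj_ker_of_surj π₂ hπ₂
  -- ker π₂ ≃ ker p
  have e₂ : (LinearMap.ker π₂) ≃ₗ[R] (LinearMap.ker p) := by
    refine LinearEquiv.ofBijective
      (LinearMap.codRestrict _ (π₁ ∘ₗ (LinearMap.ker π₂).subtype) fun c => ?_) ⟨?_, ?_⟩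
    · have h2 : (c : X).1.2 = 0 := c.2
      show p ((c : X) : F × Q).1 = 0
      rw [(memX (c : X).1).1 (c : X).2, h2, map_zero]
    · intro a b hab
      have h1 : ((a : X) : F × Q).1 = ((b : X) : F × Q).1 := by
        simpa [LinearMap.codRestrict, Subtype.ext_iff, π₁] using hab
      have h2 : ((a : X) : F × Q).2 = ((b : X) : F × Q).2 := by
        rw [(show ((a : X) : F × Q).2 = 0 from a.2), (show ((b : X) : F × Q).2 = 0 from b.2)]
      exact Subtype.ext (Subtype.ext (Prod.ext h1 h2))
    · rintro ⟨x, hx⟩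
      refine ⟨⟨⟨(x, 0), (memX _).2 (by simp [LinearMap.mem_ker.1 hx])⟩, ?_⟩, ?_⟩
      · show π₂ _ = 0
        simp [π₂]
      · apply Subtype.ext
        rfl
  exact Module.Projective.of_equiv e₂

end Schanuel

open Submodule DirectSum

section DL

variable {R : Type} [Ring R] {G : ℕ → Type} [∀ n, AddCommGroup (G n)] [∀ n, Module R (G n)]
  (f : ∀ i j : ℕ, i ≤ j → G i →ₗ[R] G j)

/-- The telescope map `x_n ↦ x_n - f x_n` on `⨁ G n`. -/
noncomputable def telescope : (⨁ n, G n) →ₗ[R] ⨁ n, G n :=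
  DirectSum.toModule R ℕ _ fun n =>
    DirectSum.lof R ℕ G n - DirectSum.lof R ℕ G (n + 1) ∘ₗ f n (n + 1) (Nat.le_succ n)

theorem telescope_lof (j : ℕ) (x : G j) :
    telescope f (DirectSum.lof R ℕ G j x) =
      DirectSum.lof R ℕ G j x - DirectSum.lof R ℕ G (j + 1) (f j (j + 1) (Nat.le_succ j) x) := by
  rw [telescope, DirectSum.toModule_lof]
  rfl

theorem telescope_apply_zero (a : ⨁ n, G n) : (telescope f a) 0 = a 0 := by
  induction a using DirectSum.induction_on with
  | zero => simp
  | of j x =>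
    rw [← DirectSum.lof_eq_of R, telescope_lof]
    rcases j with _ | j
    · simp [DirectSum.lof_eq_of, DirectSum.of_eq_same,
        DirectSum.of_eq_of_ne _ _ _ (Ne.symm (Nat.succ_ne_zero 0)), DirectSum.sub_apply]
    · simp [DirectSum.lof_eq_of, DirectSum.of_eq_of_ne _ _ _ (Ne.symm (Nat.succ_ne_zero j)),
        DirectSum.of_eq_of_ne _ _ _ (Ne.symm (Nat.succ_ne_zero (j + 1))), DirectSum.sub_apply]
  | add a b ha hb => simp [map_add, DirectSum.add_apply, ha, hb]

theorem telescope_apply_succ (a : ⨁ n, G n) (n : ℕ) :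
    (telescope f a) (n + 1) = a (n + 1) - f n (n + 1) (Nat.le_succ n) (a n) := by
  induction a using DirectSum.induction_on with
  | zero => simp
  | of j x =>
    rw [← DirectSum.lof_eq_of R, telescope_lof]
    by_cases h1 : j = n + 1
    · subst h1
      have hne : n + 1 ≠ n := Nat.succ_ne_self n
      have hne2 : n + 1 + 1 ≠ n + 1 := Nat.succ_ne_self (n + 1)
      simp [DirectSum.lof_eq_of, DirectSum.of_eq_same, DirectSum.of_eq_of_ne _ _ _ (Ne.symm hne),
        DirectSum.of_eq_of_ne _ _ _ (Ne.symm hne2), DirectSum.sub_apply]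
    · by_cases h2 : j = n
      · subst h2
        have hne : j ≠ j + 1 := (Nat.succ_ne_self j).symm
        simp [DirectSum.lof_eq_of, DirectSum.of_eq_same, DirectSum.of_eq_of_ne _ _ _ (Ne.symm hne),
          DirectSum.sub_apply]
      · have hne : j + 1 ≠ n + 1 := fun h => h1 (by omega)
        simp [DirectSum.lof_eq_of, DirectSum.of_eq_of_ne _ _ _ (Ne.symm h1),
          DirectSum.of_eq_of_ne _ _ _ (Ne.symm hne), DirectSum.of_eq_of_ne _ _ _ (Ne.symm h2), DirectSum.sub_apply]
  | add a b ha hb =>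
    simp only [map_add, DirectSum.add_apply, ha, hb]
    abel

theorem telescope_injective : Function.Injective (telescope f) := by
  rw [injective_iff_map_eq_zero]
  intro a ha
  refine DFinsupp.ext fun n => ?_
  show a n = 0
  induction n with
  | zero => rw [← telescope_apply_zero f a, ha]; rfl
  | succ n ih =>
    have := telescope_apply_succ f a n
    rw [ha, ih, map_zero] at this
    have : (0 : G (n+1)) = a (n + 1) - 0 := this
    simpa using this.symm

variable [DirectedSystem G fun i j h => f i j h]

theorem telescope_range :
    LinearMap.range (telescope f) =
      span R { a | ∃ (i j : ℕ) (H : i ≤ j) (x : G i),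
        DirectSum.lof R ℕ G i x - DirectSum.lof R ℕ G j (f i j H x) = a } := by
  apply le_antisymm
  · rintro _ ⟨a, rfl⟩
    induction a using DirectSum.induction_on with
    | zero => rw [map_zero]; exact zero_mem _
    | of j x =>
      rw [← DirectSum.lof_eq_of R, telescope_lof]
      exact subset_span ⟨j, j + 1, Nat.le_succ j, x, rfl⟩
    | add a b ha hb => rw [map_add]; exact add_mem ha hb
  · rw [span_le]
    rintro _ ⟨i, j, H, x, rfl⟩
    induction j, H using Nat.le_induction with
    | base =>
      rw [Module.DirectedSystem.map_self f x, sub_self]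
      exact zero_mem _
    | succ j hij ih =>
      have key : DirectSum.lof R ℕ G i x -
            DirectSum.lof R ℕ G (j + 1) (f i (j + 1) (le_trans hij (Nat.le_succ j)) x) =
          (DirectSum.lof R ℕ G i x - DirectSum.lof R ℕ G j (f i j hij x)) +
            telescope f (DirectSum.lof R ℕ G j (f i j hij x)) := by
        rw [telescope_lof, Module.DirectedSystem.map_map f hij (Nat.le_succ j)]
        abel
      rw [key]
      exact add_mem ih (LinearMap.mem_range_self _ _)

end DL



/-- `pdLE R n M` : `M` has projective dimension at most `n` (via iterated syzygies of the
canonical free cover). -/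
def pdLE (R : Type) [Ring R] : (n : ℕ) → (M : Type u) → [AddCommGroup M] → [Module R M] → Prop
  | 0, M, _, _ => Module.Projective R M
  | n+1, M, _, _ =>
      pdLE R n (LinearMap.ker (Finsupp.linearCombination R (_root_.id : M → M)))

/-- A flat module which is the direct limit of an `ω`-indexed direct system of projective
modules has projective dimension at most `1`. -/
theorem pdLE_one_of_countable_directLimit_of_projective
    (R : Type) [CommRing R] (M : Type) [AddCommGroup M] [Module R M] [Module.Flat R M]
    (G : ℕ → Type) [∀ n, AddCommGroup (G n)] [∀ n, Module R (G n)]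
    (f : ∀ i j : ℕ, i ≤ j → G i →ₗ[R] G j) [DirectedSystem G fun i j h => f i j h]
    (hproj : ∀ n, Module.Projective R (G n))
    (e : Nonempty (M ≃ₗ[R] Module.DirectLimit G f)) :
    pdLE R 1 M := by
  obtain ⟨e⟩ := e
  haveI : ∀ n, Module.Projective R (G n) := hproj
  haveI : Module.Projective R (⨁ n, G n) :=
    inferInstanceAs (Module.Projective R (Π₀ n, G n))
  set S : Submodule R (⨁ n, G n) := span R { a | ∃ (i j : ℕ) (H : i ≤ j) (x : G i),
      DirectSum.lof R ℕ G i x - DirectSum.lof R ℕ G j (f i j H x) = a } with hS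
  let π : (⨁ n, G n) →ₗ[R] Module.DirectLimit G f :=
    DirectSum.toModule R ℕ _ (fun i => Module.DirectLimit.of R ℕ G f i)
  let q : (⨁ n, G n) →ₗ[R] M := e.symm.toLinearMap ∘ₗ π
  have hπs : Function.Surjective π := fun z => by
    obtain ⟨i, x, rfl⟩ := Module.DirectLimit.exists_of z
    exact ⟨DirectSum.lof R ℕ G i x, DirectSum.toModule_lof R _ _⟩
  have hq : Function.Surjective q := e.symm.surjective.comp hπs
  have hkq : LinearMap.ker q = S := by
    rw [LinearMap.ker_comp, LinearEquiv.ker, Submodule.comap_bot]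
    apply le_antisymm
    · intro a ha
      let L := Module.DirectLimit.lift R ℕ G f (fun i => S.mkQ ∘ₗ DirectSum.lof R ℕ G i)
        (fun i j hij x => by
          simp only [LinearMap.comp_apply, Submodule.mkQ_apply]
          exact ((Submodule.Quotient.eq S).2 (subset_span ⟨i, j, hij, x, rfl⟩)).symm)
      have hL : ∀ b, L (π b) = S.mkQ b := fun b => by
        induction b using DirectSum.induction_on with
        | zero => simp
        | of i x =>
          rw [← DirectSum.lof_eq_of R]
          simp [π, L, DirectSum.toModule_lof, Module.DirectLimit.lift_of]
        | add a b ha hb => simp only [map_add, ha, hb]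
      have h0 : S.mkQ a = 0 := by rw [← hL, LinearMap.mem_ker.1 ha, map_zero]
      exact (Submodule.Quotient.mk_eq_zero S).1 h0
    · rw [span_le]
      rintro _ ⟨i, j, H, x, rfl⟩
      simp [π, LinearMap.mem_ker, DirectSum.toModule_lof]
  have hSproj : Module.Projective R S := by
    exact Module.Projective.of_equiv
      ((LinearEquiv.ofInjective (telescope f) (telescope_injective f)).trans
        (LinearEquiv.ofEq _ _ (telescope_range f)))
  have hkerq : Module.Projective R (LinearMap.ker q) := by rw [hkq]; exact hSproj
  show Module.Projective R (LinearMap.ker (Finsupp.linearCombination R (_root_.id : M → M)))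
  exact ker_projective_of_ker_projective (Finsupp.linearCombination R _root_.id) q
    (Finsupp.linearCombination_surjective R Function.surjective_id) hq hkerq
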